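/- Let w be an isometry of a finite-dimensional euclidean space E. The move-set Mov(w) = {w(x) - x : x ∈ E} is an affine subspace of the vector space V of translations, and the set Min(w) of points moved a minimal distance by w is an affine subspace of E. -/

import Mathlib

open RealInnerProductSpace

/-- For an isometry `w` of a finite-dimensional euclidean space `E`, the move-set
`Mov(w) = {w(x) -ᵥ x : x ∈ E}` is an affine subspace of the space of translations `V`,
and the min-set `Min(w)` of points moved a minimal distance is a (nonempty) affine
subspace of `E`. -/
theorem moveSet_minSet_affine
    {V E : Type*} [NormedAddCommGroup V] [InnerProductSpace ℝ V] [FiniteDimensional ℝ V]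
    [MetricSpace E] [NormedAddTorsor V E] (w : E ≃ᵢ E) :
    (∃ M : AffineSubspace ℝ V, (M : Set V) = {v : V | ∃ x : E, w x -ᵥ x = v} ∧
      (M : Set V).Nonempty) ∧
    (∃ B : AffineSubspace ℝ E,
      (B : Set E) = {x : E | ∀ y : E, dist (w x) x ≤ dist (w y) y} ∧
      (B : Set E).Nonempty) := by
  classical
  obtain ⟨p⟩ : Nonempty E := inferInstance
  set φ := w.toRealAffineIsometryEquiv with hφ
  have hφw : ∀ x : E, φ x = w x := fun x =>
    congrFun (w.coeFn_toRealAffineIsometryEquiv) x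
  set A : V ≃ₗᵢ[ℝ] V := φ.linearIsometryEquiv with hA
  set L : V →ₗ[ℝ] V := (A.toLinearEquiv : V →ₗ[ℝ] V) - LinearMap.id with hL
  set c : V := w p -ᵥ p with hc
  -- key formula
  have key : ∀ x : E, w x -ᵥ x = L (x -ᵥ p) + c := by
    intro x
    have h1 : A (x -ᵥ p) = φ x -ᵥ φ p := φ.map_vsub x p
    have : w x -ᵥ x = ((w x -ᵥ w p) + (w p -ᵥ p)) - (x -ᵥ p) := by
      rw [vsub_add_vsub_cancel, vsub_sub_vsub_cancel_right]
    rw [this, hL]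
    simp only [LinearMap.sub_apply, LinearMap.id_apply, LinearEquiv.coe_coe,
      LinearIsometryEquiv.coe_toLinearEquiv]
    rw [h1, hφw, hφw, hc]
    abel
  set W : Submodule ℝ V := LinearMap.range L with hW
  -- move set
  have hM : ∀ v : V, (∃ x : E, w x -ᵥ x = v) ↔ v ∈ AffineSubspace.mk' c W := by
    intro v
    rw [AffineSubspace.mem_mk']
    constructor
    · rintro ⟨x, rfl⟩
      rw [key x]
      simp only [vsub_eq_sub, add_sub_cancel_right]
      exact ⟨x -ᵥ p, rfl⟩
    · rintro ⟨u, hu⟩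
      refine ⟨u +ᵥ p, ?_⟩
      rw [key]
      simp only [vadd_vsub] at hu ⊢
      rw [hu]
      simp [vsub_eq_sub]
  -- orthogonal projection
  set c₀ : V := (W.orthogonalProjectionOnto c : V) with hc₀
  have hc₀W : c₀ ∈ W := (W.orthogonalProjectionOnto c).2
  have hperp : ∀ u ∈ W, inner ℝ u (c - c₀) = (0:ℝ) := fun u hu => by
    rw [real_inner_comm]; exact Submodule.starProjection_inner_eq_zero c u hu
  -- Pythagoras
  have pyth : ∀ u ∈ W, ‖u + c‖ ^ 2 = ‖u + c₀‖ ^ 2 + ‖c - c₀‖ ^ 2 := by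
    intro u hu
    have h1 : u + c = (u + c₀) + (c - c₀) := by abel
    have h2 : inner ℝ (u + c₀) (c - c₀) = (0:ℝ) := hperp _ (W.add_mem hu hc₀W)
    rw [h1, ← real_inner_self_eq_norm_sq, ← real_inner_self_eq_norm_sq,
      ← real_inner_self_eq_norm_sq]
    rw [inner_add_add_self, real_inner_comm (u + c₀) (c - c₀)] at *
    rw [h2]
    ring
  -- a point achieving the minimum
  obtain ⟨u₀, hu₀⟩ : -c₀ ∈ W := W.neg_mem hc₀W
  set y₀ : E := u₀ +ᵥ p with hy₀
  have hy₀L : L (y₀ -ᵥ p) = -c₀ := by rw [hy₀, vadd_vsub, hu₀]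
  have dist_eq : ∀ x : E, dist (w x) x = ‖L (x -ᵥ p) + c‖ := by
    intro x
    rw [dist_eq_norm_vsub V, key]
  have min_val : ∀ x : E, L (x -ᵥ p) = -c₀ → dist (w x) x = ‖c - c₀‖ := by
    intro x hx
    rw [dist_eq, hx]
    congr 1
    abel
  have min_le : ∀ x y : E, L (x -ᵥ p) = -c₀ → dist (w x) x ≤ dist (w y) y := by
    intro x y hx
    rw [min_val x hx, dist_eq]
    have h := pyth (L (y -ᵥ p)) ⟨_, rfl⟩
    nlinarith [norm_nonneg (L (y -ᵥ p) + c₀), norm_nonneg (L (y -ᵥ p) + c),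
      norm_nonneg (c - c₀), sq_nonneg (‖L (y -ᵥ p) + c₀‖)]
  have min_iff : ∀ x : E, (∀ y : E, dist (w x) x ≤ dist (w y) y) ↔ L (x -ᵥ p) = -c₀ := by
    intro x
    constructor
    · intro hx
      have h1 := hx y₀
      rw [dist_eq, min_val y₀ hy₀L] at h1
      have h2 := pyth (L (x -ᵥ p)) ⟨_, rfl⟩
      have h3 : ‖L (x -ᵥ p) + c₀‖ = 0 := by
        nlinarith [norm_nonneg (L (x -ᵥ p) + c₀), norm_nonneg (L (x -ᵥ p) + c),
          norm_nonneg (c - c₀)]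
      have := norm_eq_zero.mp h3
      linear_combination (norm := module) this
    · exact fun hx y => min_le x y hx
  -- affine map x ↦ L (x -ᵥ p)
  set g : E →ᵃ[ℝ] V :=
    L.toAffineMap.comp ((AffineEquiv.vaddConst ℝ p).symm : E ≃ᵃ[ℝ] V).toAffineMap with hg
  have hgx : ∀ x : E, g x = L (x -ᵥ p) := fun x => rfl
  refine ⟨⟨AffineSubspace.mk' c W, ?_, ⟨c, ?_⟩⟩,
    ⟨AffineSubspace.comap g (AffineSubspace.mk' (-c₀) ⊥), ?_, ⟨y₀, ?_⟩⟩⟩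
  · ext v; simpa using (hM v).symm
  · exact AffineSubspace.self_mem_mk' c W
  · ext x
    simp only [AffineSubspace.coe_comap, Set.mem_preimage, SetLike.mem_coe,
      AffineSubspace.mem_mk', Submodule.mem_bot, vsub_eq_sub,
      sub_eq_zero, Set.mem_setOf_eq]
    rw [hgx, min_iff]
  · show g y₀ ∈ AffineSubspace.mk' (-c₀) (⊥ : Submodule ℝ V)
    rw [AffineSubspace.mem_mk', hgx, hy₀L]
    simp
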